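/- Let σ : ℝ[x₁,…,xₙ] → ℝ be a linear form whose Hankel operator H_σ has finite rank. Then σ(p²) ≥ 0 for all p ∈ ℝ[x₁,…,xₙ] if and only if there exist r ∈ ℕ, pairwise distinct real points ξ₁,…,ξ_r ∈ ℝⁿ and real weights ω₁,…,ω_r > 0 such that σ = Σ_{i=1}^{r} ωᵢ e_{ξᵢ}. -/

import Mathlib

open MvPolynomial

namespace PolyExp

variable {K : Type*} [Field K] {n : ℕ}

/-- The iterated partial derivative operator `∂^β` on polynomials. -/
noncomputable def pderivPow (β : Fin n →₀ ℕ) :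
    Module.End K (MvPolynomial (Fin n) K) :=
  (List.ofFn fun i : Fin n =>
    ((MvPolynomial.pderiv i).toLinearMap : Module.End K (MvPolynomial (Fin n) K)) ^ (β i)).prod

/-- The constant coefficient differential operator `ω(∂) = Σ_β ω_β ∂^β`. -/
noncomputable def diffOp (ω : MvPolynomial (Fin n) K) :
    Module.End K (MvPolynomial (Fin n) K) :=
  ∑ β ∈ ω.support, ω.coeff β • pderivPow β

/-- The evaluation linear form `e_ξ : p ↦ p(ξ)`. -/
noncomputable def evalDual (ξ : Fin n → K) : Module.Dual K (MvPolynomial (Fin n) K) :=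
  (MvPolynomial.aeval ξ).toLinearMap

/-- The polynomial-exponential linear form `ω·e_ξ : p ↦ (ω(∂)p)(ξ)`. -/
noncomputable def polyExpDual (ω : MvPolynomial (Fin n) K) (ξ : Fin n → K) :
    Module.Dual K (MvPolynomial (Fin n) K) :=
  evalDual ξ ∘ₗ diffOp ω

/-- The Hankel operator `H_σ : p ↦ (q ↦ σ(p·q))`. -/
noncomputable def hankel (σ : Module.Dual K (MvPolynomial (Fin n) K)) :
    MvPolynomial (Fin n) K →ₗ[K] Module.Dual K (MvPolynomial (Fin n) K) :=
  (LinearMap.llcomp K (MvPolynomial (Fin n) K) (MvPolynomial (Fin n) K) K σ) ∘ₗ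
    (LinearMap.mul K (MvPolynomial (Fin n) K))

/-- `μ(ω)`: the dimension of the span of all partial derivatives of `ω`. -/
noncomputable def mu (ω : MvPolynomial (Fin n) K) : ℕ :=
  Module.finrank K (Submodule.span K (Set.range fun β : Fin n →₀ ℕ => pderivPow β ω))

/-- The kernel `I_σ` of the Hankel operator, as an ideal. -/
def hankelKer (σ : Module.Dual K (MvPolynomial (Fin n) K)) : Ideal (MvPolynomial (Fin n) K) where
  carrier := {p | ∀ q, σ (p * q) = 0}
  add_mem' := by
    intro a b ha hb q
    rw [add_mul, map_add, ha q, hb q, add_zero]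
  zero_mem' := by
    intro q
    rw [zero_mul, map_zero]
  smul_mem' := by
    intro c p hp q
    rw [smul_eq_mul, mul_comm c p, mul_assoc]
    exact hp (c * q)

end PolyExp

set_option maxHeartbeats 1000000
set_option synthInstance.maxHeartbeats 1000000

open PolyExp
section Aux

variable {n : ℕ} (σ : Module.Dual ℝ (MvPolynomial (Fin n) ℝ))

theorem hankel_apply (p q : MvPolynomial (Fin n) ℝ) : hankel σ p q = σ (p * q) := rfl

theorem mem_hankelKer_iff (p : MvPolynomial (Fin n) ℝ) :
    p ∈ hankelKer σ ↔ ∀ q, σ (p * q) = 0 := Iff.rfl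

theorem sigma_eq_zero_of_mem {p : MvPolynomial (Fin n) ℝ} (h : p ∈ hankelKer σ) : σ p = 0 := by
  simpa using h 1

theorem mem_hankelKer_of_sq (hp : ∀ p : MvPolynomial (Fin n) ℝ, 0 ≤ σ (p * p))
    {p : MvPolynomial (Fin n) ℝ} (h : σ (p * p) = 0) : p ∈ hankelKer σ := by
  intro q
  by_contra hc
  set c := σ (p * q) with hcdef
  set t : ℝ := -(σ (q * q) + 1) / (2 * c) with htdef
  have expand : (t • p + q) * (t • p + q) = (t * t) • (p * p) + (2 * t) • (p * q) + q * q := by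
    rw [add_mul, mul_add, mul_add, smul_mul_smul_comm, two_mul, add_smul,
      smul_mul_assoc, mul_smul_comm, mul_comm q p]
    abel
  have h2 : σ ((t • p + q) * (t • p + q)) = 2 * t * c + σ (q * q) := by
    rw [expand, map_add, map_add, map_smul, map_smul, h, smul_eq_mul, smul_eq_mul]
    ring
  have h3 : 2 * t * c = -(σ (q * q) + 1) := by
    rw [htdef]; field_simp
  have := hp (t • p + q)
  rw [h2, h3] at this
  linarith

theorem ker_mk_eq : LinearMap.ker (Ideal.Quotient.mkₐ ℝ (hankelKer σ)).toLinearMap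
    = LinearMap.ker (hankel σ) := by
  ext p
  simp only [LinearMap.mem_ker, AlgHom.toLinearMap_apply, Ideal.Quotient.mkₐ_eq_mk,
    Ideal.Quotient.eq_zero_iff_mem]
  constructor
  · intro h; exact LinearMap.ext fun q => h q
  · intro h q; exact DFunLike.congr_fun h q

theorem finiteQuot (hfin : Module.Finite ℝ (LinearMap.range (hankel σ))) :
    Module.Finite ℝ (MvPolynomial (Fin n) ℝ ⧸ hankelKer σ) := by
  let e1 := ((Ideal.Quotient.mkₐ ℝ (hankelKer σ)).toLinearMap.quotKerEquivOfSurjective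
    (Ideal.Quotient.mkₐ_surjective ℝ _)).symm
  let e2 := Submodule.quotEquivOfEq _ _ (ker_mk_eq σ)
  let e3 := (hankel σ).quotKerEquivRange
  exact Module.Finite.equiv ((e1.trans e2).trans e3).symm

theorem reducedQuot (hp : ∀ p : MvPolynomial (Fin n) ℝ, 0 ≤ σ (p * p)) :
    IsReduced (MvPolynomial (Fin n) ℝ ⧸ hankelKer σ) := by
  have key : ∀ a : MvPolynomial (Fin n) ℝ ⧸ hankelKer σ, a * a = 0 → a = 0 := by
    intro a ha
    obtain ⟨p, rfl⟩ := Ideal.Quotient.mk_surjective a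
    rw [← map_mul, Ideal.Quotient.eq_zero_iff_mem] at ha
    rw [Ideal.Quotient.eq_zero_iff_mem]
    exact mem_hankelKer_of_sq σ hp (sigma_eq_zero_of_mem σ ha)
  constructor
  rintro a ⟨k, hk⟩
  induction k using Nat.strong_induction_on generalizing a with
  | _ k ih =>
    match k, ih, hk with
    | 0, ih, hk =>
      rw [pow_zero] at hk
      exact (subsingleton_of_zero_eq_one hk.symm).elim a 0
    | 1, ih, hk => rwa [pow_one] at hk
    | (k+2), ih, hk =>
      set m := (k + 3) / 2 with hm
      have hlt : m < k + 2 := by omega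
      have hge : m + m - (k + 2) + (k + 2) = m + m := by omega
      have h0 : a ^ m = 0 := by
        apply key
        rw [← pow_add, ← hge, pow_add, hk, mul_zero]
      exact ih m hlt a h0

theorem real_or_i (K : Type*) [Field K] [Algebra ℝ K] [FiniteDimensional ℝ K] :
    Function.Bijective (algebraMap ℝ K) ∨ ∃ y : K, y * y = -1 := by
  let φ : K →ₐ[ℝ] ℂ := IsAlgClosed.lift
  have hinj : Function.Injective φ := φ.toRingHom.injective
  have hle : Module.finrank ℝ K ≤ 2 := by
    have := LinearMap.finrank_le_finrank_of_injective (f := φ.toLinearMap) hinj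
    simpa [Complex.finrank_real_complex] using this
  have hpos : 0 < Module.finrank ℝ K := Module.finrank_pos
  rcases (by omega : Module.finrank ℝ K = 1 ∨ Module.finrank ℝ K = 2) with h1 | h2
  · left
    refine ⟨(algebraMap ℝ K).injective, fun x => ?_⟩
    have hbt : (⊥ : Subalgebra ℝ K) = ⊤ := Subalgebra.bot_eq_top_of_finrank_eq_one h1
    have : x ∈ (⊥ : Subalgebra ℝ K) := hbt ▸ trivial
    rcases Algebra.mem_bot.mp this with ⟨r, hr⟩
    exact ⟨r, hr⟩
  · right
    have hsurj : Function.Surjective φ.toLinearMap := by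
      rw [← LinearMap.injective_iff_surjective_of_finrank_eq_finrank
        (by rw [h2, Complex.finrank_real_complex])]
      exact hinj
    obtain ⟨y, hy⟩ := hsurj Complex.I
    refine ⟨y, hinj ?_⟩
    have : φ y = Complex.I := hy
    rw [map_mul, this, map_neg, map_one, Complex.I_mul_I]

/-- Abstract structure theorem: a finite-dimensional commutative ℝ-algebra with a
positive definite trace form is a product of copies of ℝ, and the functional decomposes. -/
theorem algebra_decomp (A : Type*) [CommRing A] [Algebra ℝ A] [Module.Finite ℝ A]
    (τ : A →ₗ[ℝ] ℝ) (hpos : ∀ a : A, 0 ≤ τ (a * a)) (hdef : ∀ a : A, τ (a * a) = 0 → a = 0) :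
    ∃ (r : ℕ) (c : Fin r → (A →ₐ[ℝ] ℝ)) (ω : Fin r → ℝ),
      Function.Injective c ∧ (∀ k, 0 < ω k) ∧ ∀ a, τ a = ∑ k, ω k * c k a := by
  classical
  haveI : IsReduced A := by
    have key : ∀ a : A, a * a = 0 → a = 0 := fun a ha => hdef a (by rw [ha, map_zero])
    constructor
    rintro a ⟨k, hk⟩
    induction k using Nat.strong_induction_on generalizing a with
    | _ k ih =>
      match k, ih, hk with
      | 0, ih, hk =>
        rw [pow_zero] at hk
        exact (subsingleton_of_zero_eq_one hk.symm).elim a 0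
      | 1, ih, hk => rwa [pow_one] at hk
      | (k+2), ih, hk =>
        set m := (k + 3) / 2 with hm
        have hlt : m < k + 2 := by omega
        have hge : m + m - (k + 2) + (k + 2) = m + m := by omega
        have h0 : a ^ m = 0 := by
          apply key
          rw [← pow_add, ← hge, pow_add, hk, mul_zero]
        exact ih m hlt a h0
  haveI : IsArtinianRing A := isArtinian_of_tower ℝ inferInstance
  haveI : Finite {I : Ideal A | I.IsMaximal} := (IsArtinianRing.setOfPred_isMaximal_finite A).to_subtype
  haveI : Fintype {I : Ideal A | I.IsMaximal} := Fintype.ofFinite _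
  set ι := {I : Ideal A | I.IsMaximal} with hιdef
  letI instF : ∀ i : ι, Field (A ⧸ i.1) := fun i => @Ideal.Quotient.field _ _ i.1 i.2
  -- CRT surjectivity
  have exists_rep : ∀ x : ∀ i : ι, A ⧸ i.1,
      ∃ a : A, ∀ i : ι, Ideal.Quotient.mk i.1 a = x i := by
    intro x
    have hcop : Pairwise (Function.onFun IsCoprime fun i : ι => i.1) := by
      intro i j hij
      exact Ideal.isCoprime_iff_sup_eq.mpr
        (Ideal.IsMaximal.coprime_of_ne i.2 j.2 (fun h => hij (Subtype.ext h)))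
    obtain ⟨b, hb⟩ := Ideal.quotientInfToPiQuotient_surj hcop x
    obtain ⟨a, rfl⟩ := Ideal.Quotient.mk_surjective b
    refine ⟨a, fun i => ?_⟩
    have := congrFun hb i
    rwa [Ideal.quotientInfToPiQuotient_mk'] at this
  -- the intersection of maximal ideals is zero
  have hzero : ∀ a : A, (∀ i : ι, Ideal.Quotient.mk i.1 a = 0) → a = 0 := by
    intro a h
    have hmem : a ∈ ⨅ i : ι, i.1 :=
      Ideal.mem_iInf.mpr fun i => Ideal.Quotient.eq_zero_iff_mem.mp (h i)
    have hInf : (⨅ i : ι, i.1 : Ideal A) = ⊥ := by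
      have h2 : nilradical A = sInf {J : Ideal A | J.IsPrime} := nilradical_eq_sInf _
      have h3 : {J : Ideal A | J.IsPrime} = ι := by
        ext J
        exact IsArtinianRing.isPrime_iff_isMaximal J
      rw [h3, sInf_eq_iInf', nilradical_eq_zero] at h2
      exact h2.symm
    rwa [hInf, Ideal.mem_bot] at hmem
  have hfd : ∀ i : ι, FiniteDimensional ℝ (A ⧸ i.1) := fun i =>
    Module.Finite.of_surjective (Ideal.Quotient.mkₐ ℝ i.1).toLinearMap
      (Ideal.Quotient.mkₐ_surjective ℝ _)
  -- idempotents
  choose E hE using fun i : ι => exists_rep (Pi.single i 1)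
  have hidem : ∀ i : ι, E i * E i = E i := by
    intro i
    have h0 : E i * E i - E i = 0 := by
      apply hzero
      intro j
      rw [map_sub, map_mul, hE i j]
      by_cases hji : j = i
      · subst hji; rw [Pi.single_eq_same]; ring
      · rw [Pi.single_eq_of_ne hji]; ring
    rw [sub_eq_zero] at h0
    exact h0
  have hEne : ∀ i : ι, E i ≠ 0 := by
    intro i h0
    have h1 := hE i i
    rw [h0, map_zero, Pi.single_eq_same] at h1
    exact one_ne_zero h1.symm
  have hEpos : ∀ i : ι, 0 < τ (E i) := by
    intro i
    have h2 : τ (E i * E i) ≠ 0 := fun h => hEne i (hdef _ h)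
    have h3 := hpos (E i)
    rw [hidem i] at h2 h3
    exact lt_of_le_of_ne h3 (Ne.symm h2)
  -- residue fields are ℝ
  have hbij : ∀ i : ι, Function.Bijective (algebraMap ℝ (A ⧸ i.1)) := by
    intro i
    haveI := hfd i
    rcases real_or_i (A ⧸ i.1) with h | ⟨y, hy⟩
    · exact h
    · exfalso
      obtain ⟨b, hb⟩ := exists_rep (Pi.single i y)
      have hbbE : b * b + E i = 0 := by
        apply hzero
        intro j
        rw [map_add, map_mul, hb j, hE i j]
        by_cases hji : j = i
        · subst hji; rw [Pi.single_eq_same, Pi.single_eq_same, hy]; ring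
        · rw [Pi.single_eq_of_ne hji, Pi.single_eq_of_ne hji]; ring
      have h1 : τ (b * b) = -τ (E i) := by
        have : b * b = -E i := by rwa [← eq_neg_iff_add_eq_zero] at hbbE
        rw [this, map_neg]
      have hb2 := hpos b
      have hE2 := hEpos i
      rw [h1] at hb2
      linarith
  -- characters
  let χ : ∀ i : ι, (A ⧸ i.1) ≃ₐ[ℝ] ℝ := fun i =>
    (AlgEquiv.ofBijective (Algebra.ofId ℝ _) (hbij i)).symm
  have hchi : ∀ (i : ι) (z : A ⧸ i.1), algebraMap ℝ _ (χ i z) = z := by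
    intro i z
    exact (AlgEquiv.ofBijective (Algebra.ofId ℝ _) (hbij i)).apply_symm_apply z
  let c : ∀ i : ι, A →ₐ[ℝ] ℝ := fun i => ((χ i).toAlgHom).comp (Ideal.Quotient.mkₐ ℝ i.1)
  have hcmk : ∀ (i : ι) (a : A), c i a = χ i (Ideal.Quotient.mk i.1 a) := fun i a => rfl
  -- values of characters on idempotents
  have hcE : ∀ i j : ι, c j (E i) = if j = i then 1 else 0 := by
    intro i j
    rw [hcmk, hE i j]
    by_cases hji : j = i
    · subst hji; rw [Pi.single_eq_same, if_pos rfl, map_one]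
    · rw [Pi.single_eq_of_ne hji, if_neg hji, map_zero]
  -- decomposition
  have hdecomp : ∀ a : A, τ a = ∑ i : ι, τ (E i) * c i a := by
    intro a
    have hsplit : a = ∑ i : ι, c i a • E i := by
      have h0 : a - ∑ i : ι, c i a • E i = 0 := by
        apply hzero
        intro j
        rw [map_sub, map_sum]
        have hterm : ∀ i : ι, Ideal.Quotient.mk j.1 (c i a • E i)
            = c i a • Ideal.Quotient.mk j.1 (E i) := by
          intro i
          exact map_smul (Ideal.Quotient.mkₐ ℝ j.1) (c i a) (E i)
        rw [Finset.sum_congr rfl fun i _ => hterm i]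
        rw [Finset.sum_eq_single j]
        · rw [hE j j, Pi.single_eq_same, ← Algebra.algebraMap_eq_smul_one, hcmk, hchi, sub_self]
        · intro i _ hij
          rw [hE i j, Pi.single_eq_of_ne (Ne.symm hij), smul_zero]
        · intro h; exact absurd (Finset.mem_univ j) h
      rw [sub_eq_zero] at h0
      exact h0
    conv_lhs => rw [hsplit]
    rw [map_sum]
    refine Finset.sum_congr rfl fun i _ => ?_
    rw [map_smul, smul_eq_mul, mul_comm]
  -- distinctness of characters
  have hcinj : ∀ i j : ι, c i = c j → i = j := by
    intro i j hij
    by_contra hne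
    have h1 := hcE i i
    have h2 := hcE i j
    rw [if_pos rfl] at h1
    rw [if_neg (fun h => hne h.symm)] at h2
    rw [hij] at h1
    exact one_ne_zero (h1.symm.trans h2)
  -- reindex
  let r := Fintype.card ι
  let eqv : Fin r ≃ ι := (Fintype.equivFin ι).symm
  refine ⟨r, fun k => c (eqv k), fun k => τ (E (eqv k)), ?_, fun k => hEpos _, ?_⟩
  · intro k l h
    exact eqv.injective (hcinj _ _ h)
  · intro a
    rw [hdecomp a]
    exact (Equiv.sum_comp eqv fun i => τ (E i) * c i a).symm

theorem forward (hp : ∀ p : MvPolynomial (Fin n) ℝ, 0 ≤ σ (p * p))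
    (hfin : Module.Finite ℝ (LinearMap.range (hankel σ))) :
    ∃ (r : ℕ) (ξ : Fin r → Fin n → ℝ) (ω : Fin r → ℝ),
      Function.Injective ξ ∧ (∀ i, 0 < ω i) ∧
      σ = ∑ i, ω i • PolyExp.evalDual (ξ i) := by
  classical
  haveI hA : Module.Finite ℝ (MvPolynomial (Fin n) ℝ ⧸ hankelKer σ) := finiteQuot σ hfin
  have hle : (hankelKer σ).restrictScalars ℝ ≤ LinearMap.ker σ := fun p hpI => by
    simpa using sigma_eq_zero_of_mem σ hpI
  let eqv :=
    (Submodule.Quotient.restrictScalarsEquiv ℝ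
      ((hankelKer σ) : Submodule (MvPolynomial (Fin n) ℝ) (MvPolynomial (Fin n) ℝ))).symm
  let τ : (MvPolynomial (Fin n) ℝ ⧸ hankelKer σ) →ₗ[ℝ] ℝ :=
    (Submodule.liftQ ((hankelKer σ).restrictScalars ℝ) σ hle) ∘ₗ eqv.toLinearMap
  have hτ : ∀ p, τ (Ideal.Quotient.mk (hankelKer σ) p) = σ p := by
    intro p
    show (Submodule.liftQ ((hankelKer σ).restrictScalars ℝ) σ hle)
      ((Submodule.Quotient.restrictScalarsEquiv ℝ _).symm (Ideal.Quotient.mk _ p)) = σ p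
    rw [← Ideal.Quotient.mk_eq_mk, Submodule.Quotient.restrictScalarsEquiv_symm_mk,
      Submodule.liftQ_apply]
  have hpos' : ∀ a : MvPolynomial (Fin n) ℝ ⧸ hankelKer σ, 0 ≤ τ (a * a) := by
    intro a
    obtain ⟨p, rfl⟩ := Ideal.Quotient.mk_surjective a
    rw [← map_mul, hτ]
    exact hp p
  have hdef' : ∀ a : MvPolynomial (Fin n) ℝ ⧸ hankelKer σ, τ (a * a) = 0 → a = 0 := by
    intro a h
    obtain ⟨p, rfl⟩ := Ideal.Quotient.mk_surjective a
    rw [← map_mul, hτ] at h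
    exact Ideal.Quotient.eq_zero_iff_mem.mpr (mem_hankelKer_of_sq σ hp h)
  obtain ⟨r, c, ω, hcinj, hωpos, hdecomp⟩ := algebra_decomp _ τ hpos' hdef'
  set ξ : Fin r → Fin n → ℝ := fun k j => c k (Ideal.Quotient.mk (hankelKer σ) (X j)) with hξ
  have hck : ∀ (k : Fin r) (p), c k (Ideal.Quotient.mk (hankelKer σ) p) = aeval (ξ k) p := by
    intro k p
    have : (c k).comp (Ideal.Quotient.mkₐ ℝ (hankelKer σ)) p = aeval (ξ k) p := by
      conv_lhs => rw [aeval_unique ((c k).comp (Ideal.Quotient.mkₐ ℝ (hankelKer σ)))]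
      rfl
    exact this
  refine ⟨r, ξ, ω, ?_, hωpos, ?_⟩
  · intro k l h
    apply hcinj
    apply AlgHom.ext
    intro a
    obtain ⟨p, rfl⟩ := Ideal.Quotient.mk_surjective a
    rw [hck, hck, h]
  · apply LinearMap.ext
    intro p
    have h1 : σ p = ∑ k, ω k * aeval (ξ k) p := by
      rw [← hτ p, hdecomp]
      exact Finset.sum_congr rfl fun k _ => by rw [hck]
    rw [h1]
    simp [evalDual, smul_eq_mul]

end Aux

/-- A linear form `σ` on `ℝ[x]` whose Hankel operator has finite rank
satisfies `σ(p²) ≥ 0` for all `p` iff `σ = Σᵢ ωᵢ e_{ξᵢ}` for pairwise distinct real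
points `ξᵢ` and positive weights `ωᵢ`. -/
theorem statement9 {n : ℕ} (σ : Module.Dual ℝ (MvPolynomial (Fin n) ℝ))
    (hfin : Module.Finite ℝ (LinearMap.range (PolyExp.hankel σ))) :
    (∀ p : MvPolynomial (Fin n) ℝ, 0 ≤ σ (p * p)) ↔
    (∃ (r : ℕ) (ξ : Fin r → Fin n → ℝ) (ω : Fin r → ℝ),
      Function.Injective ξ ∧ (∀ i, 0 < ω i) ∧
      σ = ∑ i, ω i • PolyExp.evalDual (ξ i)) := by
  constructor
  · intro hp
    exact forward σ hp hfin
  · rintro ⟨r, ξ, ω, hinj, hω, rfl⟩ p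
    simp only [LinearMap.sum_apply, LinearMap.smul_apply, smul_eq_mul]
    apply Finset.sum_nonneg
    intro k _
    have h1 : PolyExp.evalDual (ξ k) (p * p) = (aeval (ξ k) p) * (aeval (ξ k) p) := by
      simp [PolyExp.evalDual]
    rw [h1]
    exact mul_nonneg (hω k).le (mul_self_nonneg _)
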